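/- Let A be a finite set. Every irreducible sofic subshift X ⊆ A^ℤ is a W-subshift; in particular, every irreducible subshift of finite type X ⊆ A^ℤ is a W-subshift. -/

import Mathlib

/-- The shift action of `ℤ` on configurations `x : ℤ → A`: `(n • x)(m) = x(m - n)`. -/
def shiftZ {A : Type*} (n : ℤ) (x : ℤ → A) : ℤ → A :=
  fun m => x (m - n)

/-- A subshift is a closed, shift-invariant subset of `A^ℤ` (with the prodiscrete
topology). -/
def IsSubshiftZ {A : Type*} [TopologicalSpace A] (X : Set (ℤ → A)) : Prop :=
  IsClosed X ∧ ∀ (n : ℤ) (x : ℤ → A), x ∈ X → shiftZ n x ∈ X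

/-- A configuration is periodic if its orbit under the shift action is finite. -/
def IsPeriodicZ {A : Type*} (x : ℤ → A) : Prop :=
  (Set.range fun n : ℤ => shiftZ n x).Finite

/-- A subshift `X ⊆ A^ℤ` is strongly irreducible if there is a finite `Δ ⊆ ℤ` such
that whenever `Ω₁, Ω₂` are finite subsets of `ℤ` with `(Ω₁ - Δ) ∩ Ω₂ = ∅`, any two
configurations of `X` can be glued along `Ω₁` and `Ω₂` inside `X`. -/
def IsStronglyIrreducibleZ {A : Type*} (X : Set (ℤ → A)) : Prop :=
  ∃ Δ : Finset ℤ, ∀ Ω₁ Ω₂ : Finset ℤ,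
    (∀ a ∈ Ω₁, ∀ d ∈ Δ, a - d ∉ Ω₂) →
    ∀ x₁ ∈ X, ∀ x₂ ∈ X, ∃ x ∈ X,
      (∀ i ∈ Ω₁, x i = x₁ i) ∧ (∀ i ∈ Ω₂, x i = x₂ i)

/-- The word `w` appears as a subword of the configuration `x : ℤ → A`. -/
def AppearsIn {A : Type*} (w : List A) (x : ℤ → A) : Prop :=
  ∃ i : ℤ, ∀ k : Fin w.length, x (i + (k.1 : ℤ)) = w.get k

/-- The language of `X ⊆ A^ℤ`: all finite words appearing in configurations of `X`. -/
def lang {A : Type*} (X : Set (ℤ → A)) : Set (List A) :=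
  {w : List A | ∃ x ∈ X, AppearsIn w x}

/-- `X ⊆ A^ℤ` is irreducible if any two words of its language can be joined,
within the language, by some word. -/
def IrreducibleZ {A : Type*} (X : Set (ℤ → A)) : Prop :=
  ∀ u ∈ lang X, ∀ v ∈ lang X, ∃ w : List A, u ++ w ++ v ∈ lang X

/-- `X ⊆ A^ℤ` is a W-subshift if there is `n₀ ≥ 0` such that any two words of its
language can be joined, within the language, by a word of length at most `n₀`. -/
def IsWSubshift {A : Type*} (X : Set (ℤ → A)) : Prop :=
  ∃ n₀ : ℕ, ∀ u ∈ lang X, ∀ v ∈ lang X,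
    ∃ c ∈ lang X, c.length ≤ n₀ ∧ u ++ c ++ v ∈ lang X

/-- A subshift of `A^ℤ` is of finite type if it is defined by a finite window `Ω` and
a set of allowed patterns `P ⊆ A^Ω`. -/
def IsOfFiniteTypeZ {A : Type*} (X : Set (ℤ → A)) : Prop :=
  ∃ (Ω : Finset ℤ) (P : Set ({i : ℤ // i ∈ Ω} → A)),
    X = {x : ℤ → A | ∀ n : ℤ, (fun w : {i : ℤ // i ∈ Ω} => shiftZ n x w.1) ∈ P}

/-- A subshift `X ⊆ A^ℤ` is sofic if it is the image of a subshift of finite type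
`Y ⊆ B^ℤ` (over a finite alphabet `B`, with its prodiscrete topology) under a
surjective continuous shift-equivariant map. -/
def IsSoficZ {A : Type*} [TopologicalSpace A] (X : Set (ℤ → A)) : Prop :=
  ∃ (B : Type) (_ : Finite B) (Y : Set (ℤ → B)) (f : (ℤ → B) → (ℤ → A)),
    letI : TopologicalSpace B := ⊥
    IsSubshiftZ Y ∧ IsOfFiniteTypeZ Y ∧
      ContinuousOn f Y ∧ (∀ (n : ℤ), ∀ y ∈ Y, f (shiftZ n y) = shiftZ n (f y)) ∧
      f '' Y = X

/-- The periodic configuration `w^∞ ∈ A^ℤ` obtained by repeating a nonempty word `w`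
bi-infinitely. -/
def perConfig {A : Type*} (w : List A) (hw : w ≠ []) : ℤ → A := fun i =>
  w.get ⟨(i % (w.length : ℤ)).toNat, by
    have h0 : 0 < w.length := List.length_pos_iff.mpr hw
    have h1 : 0 ≤ i % (w.length : ℤ) :=
      Int.emod_nonneg _ (by exact_mod_cast h0.ne')
    have h2 : i % (w.length : ℤ) < (w.length : ℤ) :=
      Int.emod_lt_of_pos _ (by exact_mod_cast h0)
    omega⟩

section Helpers

variable {A : Type*}

lemma lang_factor {X : Set (ℤ → A)} {u w v : List A} (h : u ++ w ++ v ∈ lang X) :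
    w ∈ lang X := by
  obtain ⟨x, hx, i, happ⟩ := h
  refine ⟨x, hx, i + u.length, fun k => ?_⟩
  have hk : (u.length + k.1) < (u ++ w ++ v).length := by
    simp [List.length_append]; omega
  have := happ ⟨u.length + k.1, hk⟩
  simp only [List.get_eq_getElem] at this ⊢
  have e1 : (u ++ w ++ v)[u.length + k.1]'hk = w[k.1] := by
    have h2 : u.length + k.1 < (u ++ w).length := by simp
    rw [List.getElem_append_left h2, List.getElem_append_right (by omega)]
    congr 1
    omega
  rw [e1] at this
  rw [← this]
  congr 1
  push_cast
  ring

/-- Abstract finiteness-of-classes criterion for being a W-subshift. -/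
lemma W_of_classes {S T : Type*} [Finite S] [Finite T] {X : Set (ℤ → A)}
    (gR : List A → S) (gL : List A → T)
    (HR : ∀ u u' v : List A, gR u = gR u' → u ++ v ∈ lang X → u' ++ v ∈ lang X)
    (HL : ∀ v v' u : List A, gL v = gL v' → u ++ v ∈ lang X → u ++ v' ∈ lang X)
    (hirr : IrreducibleZ X) : IsWSubshift X := by
  classical
  have := Fintype.ofFinite (S × T)
  set Q : S × T → Prop := fun p =>
    ∃ u v : List A, u ∈ lang X ∧ v ∈ lang X ∧ gR u = p.1 ∧ gL v = p.2 with hQ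
  -- pick a connecting word for every realizable pair of classes
  have hW : ∀ p : S × T, Q p → ∃ w : List A,
      ∀ u v : List A, u ∈ lang X → v ∈ lang X → gR u = p.1 → gL v = p.2 →
        u ++ w ++ v ∈ lang X := by
    rintro p ⟨u₀, v₀, hu₀, hv₀, hgu₀, hgv₀⟩
    obtain ⟨w, hw⟩ := hirr u₀ hu₀ v₀ hv₀
    refine ⟨w, fun u v hu hv hgu hgv => ?_⟩
    have h1 : u₀ ++ (w ++ v₀) ∈ lang X := by
      rwa [← List.append_assoc]
    have h2 : u ++ (w ++ v₀) ∈ lang X :=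
      HR u₀ u (w ++ v₀) (by rw [hgu₀, hgu]) h1
    have h3 : (u ++ w) ++ v₀ ∈ lang X := by rwa [List.append_assoc]
    have h4 : (u ++ w) ++ v ∈ lang X :=
      HL v₀ v (u ++ w) (by rw [hgv₀, hgv]) h3
    exact h4
  choose wfun hwfun using hW
  set len : S × T → ℕ := fun p => if h : Q p then (wfun p h).length else 0 with hlen
  refine ⟨Finset.univ.sup len, fun u hu v hv => ?_⟩
  set p : S × T := (gR u, gL v) with hp
  have hQp : Q p := ⟨u, v, hu, hv, rfl, rfl⟩
  have hmem : u ++ wfun p hQp ++ v ∈ lang X :=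
    hwfun p hQp u v hu hv rfl rfl
  refine ⟨wfun p hQp, lang_factor hmem, ?_, hmem⟩
  have : len p = (wfun p hQp).length := by simp [hlen, hQp]
  rw [← this]
  exact Finset.le_sup (Finset.mem_univ p)

end Helpers

/-- A continuous shift-equivariant map on a compact shift-invariant set is a
sliding block code: it admits a finite radius `r`. -/
lemma exists_radius {A B : Type*} [Finite B] [TopologicalSpace B] [DiscreteTopology B]
    [TopologicalSpace A] [DiscreteTopology A]
    {Y : Set (ℤ → B)} {f : (ℤ → B) → (ℤ → A)}
    (hcl : IsClosed Y) (hinv : ∀ n : ℤ, ∀ y ∈ Y, shiftZ n y ∈ Y)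
    (hcont : ContinuousOn f Y)
    (hequiv : ∀ n : ℤ, ∀ y ∈ Y, f (shiftZ n y) = shiftZ n (f y)) :
    ∃ r : ℕ, ∀ y ∈ Y, ∀ y' ∈ Y, ∀ n : ℤ,
      (∀ j : ℤ, n - r ≤ j → j ≤ n + r → y j = y' j) → f y n = f y' n := by
  classical
  have hg : ContinuousOn (fun z => f z 0) Y :=
    (continuous_apply (0 : ℤ)).comp_continuousOn hcont
  -- local windows
  have hA : ∀ y : {z // z ∈ Y}, ∃ F : Finset ℤ, ∀ z ∈ Y,
      (∀ j ∈ F, z j = y.1 j) → f z 0 = f y.1 0 := by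
    rintro ⟨y, hy⟩
    have hcw : ContinuousWithinAt (fun z => f z 0) Y y := hg y hy
    have hmem : (fun z => f z 0) ⁻¹' {f y 0} ∈ nhdsWithin y Y :=
      hcw (isOpen_discrete {f y 0} |>.mem_nhds rfl)
    obtain ⟨U, hUopen, hyU, hUsub⟩ := mem_nhdsWithin.1 hmem
    obtain ⟨I, u, hIu, hpi⟩ := isOpen_pi_iff.1 hUopen y hyU
    refine ⟨I, fun z hz hagree => ?_⟩
    have hzU : z ∈ U := by
      apply hpi
      intro a ha
      rw [hagree a ha]
      exact (hIu a ha).2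
    exact hUsub ⟨hzU, hz⟩
  choose F hF using hA
  -- compactness: finitely many windows suffice
  have hYcomp : IsCompact Y := hcl.isCompact
  have hopen : ∀ y : {z // z ∈ Y}, IsOpen {z : ℤ → B | ∀ j ∈ F y, z j = y.1 j} := by
    intro y
    have : {z : ℤ → B | ∀ j ∈ F y, z j = y.1 j}
        = (↑(F y) : Set ℤ).pi (fun j => {y.1 j}) := by
      ext z; simp [Set.mem_pi]
    rw [this]
    exact isOpen_set_pi (F y).finite_toSet (fun i _ => isOpen_discrete _)
  have hcover : Y ⊆ ⋃ y : {z // z ∈ Y}, {z : ℤ → B | ∀ j ∈ F y, z j = y.1 j} := by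
    intro z hz
    exact Set.mem_iUnion.2 ⟨⟨z, hz⟩, fun j _ => rfl⟩
  obtain ⟨t, ht⟩ := hYcomp.elim_finite_subcover _ hopen hcover
  set G : Finset ℤ := t.biUnion (fun y => F y) with hG
  set r : ℕ := G.sup (fun j => j.natAbs) with hr
  refine ⟨r, ?_⟩
  -- first at the origin
  have key0 : ∀ y ∈ Y, ∀ y' ∈ Y,
      (∀ j : ℤ, -(r : ℤ) ≤ j → j ≤ r → y j = y' j) → f y 0 = f y' 0 := by
    intro y hy y' hy' hagree
    obtain ⟨y₀, hy₀t, hyc⟩ := Set.mem_iUnion₂.1 (ht hy)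
    have hsmall : ∀ j ∈ F y₀, -(r : ℤ) ≤ j ∧ j ≤ r := by
      intro j hj
      have hjG : j ∈ G := Finset.mem_biUnion.2 ⟨y₀, hy₀t, hj⟩
      have h2 : j.natAbs ≤ r := Finset.le_sup (f := fun j : ℤ => j.natAbs) hjG
      omega
    have hyc' : ∀ j ∈ F y₀, y' j = y₀.1 j := by
      intro j hj
      rw [← (hagree j (hsmall j hj).1 (hsmall j hj).2)]
      exact hyc j hj
    rw [hF y₀ y hy hyc, hF y₀ y' hy' hyc']
  -- then everywhere, by equivariance
  intro y hy y' hy' n hagree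
  have h1 : f (shiftZ (-n) y) 0 = f (shiftZ (-n) y') 0 := by
    apply key0 _ (hinv _ _ hy) _ (hinv _ _ hy')
    intro j h1 h2
    show y (j - (-n)) = y' (j - (-n))
    exact hagree _ (by omega) (by omega)
  have e1 : f (shiftZ (-n) y) 0 = f y n := by
    rw [hequiv (-n) y hy]; show f y (0 - (-n)) = f y n; norm_num
  have e2 : f (shiftZ (-n) y') 0 = f y' n := by
    rw [hequiv (-n) y' hy']; show f y' (0 - (-n)) = f y' n; norm_num
  rw [← e1, ← e2, h1]

example {B : Type*} [Finite B] (M : ℕ) : Finite (Set (Fin M → B)) := by infer_instance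

/-- A subshift of finite type admits a splicing constant `m`: two configurations
agreeing on an interval of length `m` can be spliced. -/
lemma sft_splice {B : Type*} {Y : Set (ℤ → B)} (hft : IsOfFiniteTypeZ Y) :
    ∃ m : ℕ, 1 ≤ m ∧ ∀ y₁ ∈ Y, ∀ y₂ ∈ Y, ∀ a : ℤ,
      (∀ j : ℤ, a ≤ j → j < a + m → y₁ j = y₂ j) →
      (fun j => if j < a + (m : ℤ) then y₁ j else y₂ j) ∈ Y := by
  obtain ⟨Ω, P, hY⟩ := hft
  have hkm : ∃ (k : ℤ) (m : ℕ), 1 ≤ m ∧ ∀ i ∈ Ω, k ≤ i ∧ i < k + m := by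
    rcases Ω.eq_empty_or_nonempty with h | h
    · exact ⟨0, 1, le_refl 1, by simp [h]⟩
    · refine ⟨Ω.min' h, (Ω.max' h - Ω.min' h).toNat + 1, by omega, fun i hi => ?_⟩
      have h1 := Ω.min'_le i hi
      have h2 := Ω.le_max' i hi
      have h3 := Ω.min'_le _ (Ω.max'_mem h)
      refine ⟨h1, ?_⟩
      push_cast
      omega
  obtain ⟨k, m, hm, hbound⟩ := hkm
  refine ⟨m, hm, ?_⟩
  intro y₁ hy₁ y₂ hy₂ a hagree
  rw [hY] at hy₁ hy₂ ⊢
  intro n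
  by_cases hcase : a ≤ k - n
  · have he : (fun w : {i : ℤ // i ∈ Ω} =>
        shiftZ n (fun j => if j < a + (m : ℤ) then y₁ j else y₂ j) w.1)
        = (fun w : {i : ℤ // i ∈ Ω} => shiftZ n y₂ w.1) := by
      funext w
      obtain ⟨hb1, hb2⟩ := hbound w.1 w.2
      show (if w.1 - n < a + (m : ℤ) then y₁ (w.1 - n) else y₂ (w.1 - n)) = y₂ (w.1 - n)
      by_cases h : w.1 - n < a + (m : ℤ)
      · rw [if_pos h]
        exact hagree _ (by omega) h
      · rw [if_neg h]
    rw [he]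
    exact hy₂ n
  · have he : (fun w : {i : ℤ // i ∈ Ω} =>
        shiftZ n (fun j => if j < a + (m : ℤ) then y₁ j else y₂ j) w.1)
        = (fun w : {i : ℤ // i ∈ Ω} => shiftZ n y₁ w.1) := by
      funext w
      obtain ⟨hb1, hb2⟩ := hbound w.1 w.2
      show (if w.1 - n < a + (m : ℤ) then y₁ (w.1 - n) else y₂ (w.1 - n)) = y₁ (w.1 - n)
      rw [if_pos (by omega)]
    rw [he]
    exact hy₁ n

/-- Main lemma: a subshift that is the image of a splicable set under a sliding
block code, and is irreducible, is a W-subshift. -/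
lemma main_W {A B : Type*} [Finite B] {X : Set (ℤ → A)} {Y : Set (ℤ → B)}
    {f : (ℤ → B) → (ℤ → A)} (m r : ℕ) (hm : 1 ≤ m)
    (hinv : ∀ n : ℤ, ∀ y ∈ Y, shiftZ n y ∈ Y)
    (hsplice : ∀ y₁ ∈ Y, ∀ y₂ ∈ Y, ∀ a : ℤ,
      (∀ j : ℤ, a ≤ j → j < a + m → y₁ j = y₂ j) →
      (fun j => if j < a + (m : ℤ) then y₁ j else y₂ j) ∈ Y)
    (hloc : ∀ y ∈ Y, ∀ y' ∈ Y, ∀ n : ℤ,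
      (∀ j : ℤ, n - r ≤ j → j ≤ n + r → y j = y' j) → f y n = f y' n)
    (hequiv : ∀ n : ℤ, ∀ y ∈ Y, f (shiftZ n y) = shiftZ n (f y))
    (himg : f '' Y = X) (hirr : IrreducibleZ X) : IsWSubshift X := by
  classical
  set M : ℕ := m + 2 * r with hM
  set gR : List A → Set (Fin M → B) := fun u =>
    {t | ∃ y ∈ Y, ∃ i : ℤ, (∀ k : Fin u.length, f y (i + k.1) = u.get k) ∧
      (∀ k : Fin M, y (i + u.length - (m + r) + k.1) = t k)} with hgR
  set gL : List A → Set (Fin M → B) := fun v =>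
    {t | ∃ y ∈ Y, ∃ i : ℤ, (∀ k : Fin v.length, f y (i + k.1) = v.get k) ∧
      (∀ k : Fin M, y (i - r + k.1) = t k)} with hgL
  have HR : ∀ u u' v : List A, gR u = gR u' →
      u ++ v ∈ lang X → u' ++ v ∈ lang X := by
    intro u u' v hg huv
    obtain ⟨x, hxX, i, happ⟩ := huv
    rw [← himg] at hxX
    obtain ⟨y, hyY, rfl⟩ := hxX
    set c : ℤ := i + u.length with hc
    have ht : (fun k : Fin M => y (i + u.length - (m + r) + k.1)) ∈ gR u := by
      refine ⟨y, hyY, i, fun k => ?_, fun k => rfl⟩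
      have hk : k.1 < (u ++ v).length := by simp only [List.length_append]; omega
      have h1 := happ ⟨k.1, hk⟩
      simp only [List.get_eq_getElem] at h1 ⊢
      rw [h1]
      exact List.getElem_append_left k.2
    rw [hg] at ht
    obtain ⟨y', hy'Y, i', h1', h2'⟩ := ht
    set d : ℤ := (i + u.length) - (i' + u'.length) with hd
    set y'' : ℤ → B := shiftZ d y' with hy''
    have hy''Y : y'' ∈ Y := hinv d y' hy'Y
    have hagree : ∀ j : ℤ, c - (m + r) ≤ j → j < c + r → y'' j = y j := by
      intro j hj1 hj2
      set kj : ℕ := (j - (c - (m + r))).toNat with hkj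
      have hkjz : (kj : ℤ) = j - (c - (m + r)) := Int.toNat_of_nonneg (by omega)
      have hkM : kj < M := by omega
      have h2k : y' (i' + u'.length - (m + r) + (kj : ℤ))
          = y (i + u.length - (m + r) + (kj : ℤ)) := h2' ⟨kj, hkM⟩
      have e1 : y'' j = y' (i' + u'.length - (m + r) + (kj : ℤ)) := by
        show y' (j - d) = _
        congr 1
        omega
      have e2 : y (i + u.length - (m + r) + (kj : ℤ)) = y j := by
        congr 1
        omega
      rw [e1, h2k, e2]
    set z : ℤ → B := fun j => if j < (c - r - m) + (m : ℤ) then y'' j else y j with hz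
    have hzY : z ∈ Y :=
      hsplice y'' hy''Y y hyY (c - r - m)
        (fun j hj1 hj2 => hagree j (by omega) (by omega))
    have hz1 : ∀ j : ℤ, j < c + r → z j = y'' j := by
      intro j hj
      show (if j < (c - r - m) + (m : ℤ) then y'' j else y j) = y'' j
      by_cases h : j < (c - r - m) + (m : ℤ)
      · rw [if_pos h]
      · rw [if_neg h]
        exact (hagree j (by omega) hj).symm
    have hz2 : ∀ j : ℤ, c - r ≤ j → z j = y j := by
      intro j hj
      show (if j < (c - r - m) + (m : ℤ) then y'' j else y j) = y j
      rw [if_neg (by omega)]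
    refine ⟨f z, himg ▸ ⟨z, hzY, rfl⟩, c - u'.length, ?_⟩
    intro k
    have hklen : k.1 < u'.length + v.length := by
      have := k.2; simpa using this
    simp only [List.get_eq_getElem]
    by_cases hcase : k.1 < u'.length
    · have e1 : f z (c - u'.length + k.1) = f y'' (c - u'.length + k.1) :=
        hloc z hzY y'' hy''Y _ (fun j hj1 hj2 => hz1 j (by omega))
      have e2 : f y'' (c - u'.length + k.1) = f y' (c - u'.length + k.1 - d) := by
        rw [hy'', hequiv d y' hy'Y]
        rfl
      have e3 : c - u'.length + k.1 - d = i' + k.1 := by omega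
      have h4 := h1' ⟨k.1, hcase⟩
      simp only [List.get_eq_getElem] at h4
      rw [e1, e2, e3, h4]
      exact (List.getElem_append_left hcase).symm
    · have hk2 : u'.length ≤ k.1 := by omega
      have e1 : f z (c - u'.length + k.1) = f y (c - u'.length + k.1) :=
        hloc z hzY y hyY _ (fun j hj1 hj2 => hz2 j (by omega))
      have hk : u.length + (k.1 - u'.length) < (u ++ v).length := by simp only [List.length_append]; omega
      have h4 := happ ⟨u.length + (k.1 - u'.length), hk⟩
      simp only [List.get_eq_getElem] at h4
      have e2 : c - u'.length + k.1 = i + (u.length + (k.1 - u'.length) : ℕ) := by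
        push_cast
        omega
      rw [e1, e2, h4]
      rw [List.getElem_append_right (by omega), List.getElem_append_right (by omega)]
      congr 1
      omega
  have HL : ∀ v v' u : List A, gL v = gL v' →
      u ++ v ∈ lang X → u ++ v' ∈ lang X := by
    intro v v' u hg huv
    obtain ⟨x, hxX, i, happ⟩ := huv
    rw [← himg] at hxX
    obtain ⟨y, hyY, rfl⟩ := hxX
    set b : ℤ := i + u.length with hb
    have ht : (fun k : Fin M => y (b - r + k.1)) ∈ gL v := by
      refine ⟨y, hyY, b, fun k => ?_, fun k => rfl⟩
      have hk : u.length + k.1 < (u ++ v).length := by simp only [List.length_append]; omega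
      have h1 := happ ⟨u.length + k.1, hk⟩
      simp only [List.get_eq_getElem] at h1 ⊢
      have e2 : b + (k.1 : ℤ) = i + (u.length + k.1 : ℕ) := by push_cast; omega
      rw [e2, h1, List.getElem_append_right (by omega)]
      congr 1
      omega
    rw [hg] at ht
    obtain ⟨y', hy'Y, i', h1', h2'⟩ := ht
    set d : ℤ := b - i' with hd
    set y'' : ℤ → B := shiftZ d y' with hy''
    have hy''Y : y'' ∈ Y := hinv d y' hy'Y
    have hagree : ∀ j : ℤ, b - r ≤ j → j < b + m + r → y'' j = y j := by
      intro j hj1 hj2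
      set kj : ℕ := (j - (b - r)).toNat with hkj
      have hkjz : (kj : ℤ) = j - (b - r) := Int.toNat_of_nonneg (by omega)
      have hkM : kj < M := by omega
      have h2k : y' (i' - r + (kj : ℤ)) = y (b - r + (kj : ℤ)) := h2' ⟨kj, hkM⟩
      have e1 : y'' j = y' (i' - r + (kj : ℤ)) := by
        show y' (j - d) = _
        congr 1
        omega
      have e2 : y (b - r + (kj : ℤ)) = y j := by
        congr 1
        omega
      rw [e1, h2k, e2]
    set z : ℤ → B := fun j => if j < (b + r) + (m : ℤ) then y j else y'' j with hz
    have hzY : z ∈ Y :=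
      hsplice y hyY y'' hy''Y (b + r)
        (fun j hj1 hj2 => (hagree j (by omega) (by omega)).symm)
    have hz1 : ∀ j : ℤ, j < b + r → z j = y j := by
      intro j hj
      show (if j < (b + r) + (m : ℤ) then y j else y'' j) = y j
      rw [if_pos (by omega)]
    have hz2 : ∀ j : ℤ, b - r ≤ j → z j = y'' j := by
      intro j hj
      show (if j < (b + r) + (m : ℤ) then y j else y'' j) = y'' j
      by_cases h : j < (b + r) + (m : ℤ)
      · rw [if_pos h]
        exact (hagree j hj (by omega)).symm
      · rw [if_neg h]
    refine ⟨f z, himg ▸ ⟨z, hzY, rfl⟩, i, ?_⟩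
    intro k
    have hklen : k.1 < u.length + v'.length := by
      have := k.2; simpa using this
    simp only [List.get_eq_getElem]
    by_cases hcase : k.1 < u.length
    · have e1 : f z (i + k.1) = f y (i + k.1) :=
        hloc z hzY y hyY _ (fun j hj1 hj2 => hz1 j (by omega))
      have hk : k.1 < (u ++ v).length := by simp only [List.length_append]; omega
      have h4 := happ ⟨k.1, hk⟩
      simp only [List.get_eq_getElem] at h4
      rw [e1, h4, List.getElem_append_left hcase,
        List.getElem_append_left hcase]
    · have hk2 : u.length ≤ k.1 := by omega
      have e1 : f z (i + k.1) = f y'' (i + k.1) :=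
        hloc z hzY y'' hy''Y _ (fun j hj1 hj2 => hz2 j (by omega))
      have e2 : f y'' (i + k.1) = f y' (i + k.1 - d) := by
        rw [hy'', hequiv d y' hy'Y]
        rfl
      have e3 : i + (k.1 : ℤ) - d = i' + ((k.1 - u.length : ℕ) : ℤ) := by
        omega
      have h4 := h1' ⟨k.1 - u.length, by omega⟩
      simp only [List.get_eq_getElem] at h4
      rw [e1, e2, e3, h4, List.getElem_append_right hk2]
  exact W_of_classes gR gL HR HL hirr

/-- Every irreducible sofic subshift `X ⊆ A^ℤ` is a W-subshift; in particular, every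
irreducible subshift of finite type `X ⊆ A^ℤ` is a W-subshift. -/
theorem irreducible_sofic_is_W
    {A : Type*} [Finite A] [TopologicalSpace A] [DiscreteTopology A] :
    (∀ X : Set (ℤ → A), IsSubshiftZ X → IrreducibleZ X → IsSoficZ X →
      IsWSubshift X) ∧
    (∀ X : Set (ℤ → A), IsSubshiftZ X → IrreducibleZ X → IsOfFiniteTypeZ X →
      IsWSubshift X) := by
  constructor
  · intro X hsub hirr hsof
    obtain ⟨B, hBfin, Y, f, hY, hYft, hcont, hequiv, himg⟩ := hsof
    letI : TopologicalSpace B := ⊥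
    haveI : DiscreteTopology B := ⟨rfl⟩
    obtain ⟨m, hm, hsplice⟩ := sft_splice hYft
    obtain ⟨r, hloc⟩ := exists_radius hY.1 hY.2 hcont hequiv
    exact main_W m r hm hY.2 hsplice hloc hequiv himg hirr
  · intro X hsub hirr hft
    obtain ⟨m, hm, hsplice⟩ := sft_splice hft
    exact main_W (f := fun y => y) m 0 hm hsub.2 hsplice
      (fun y _ y' _ n h => h n (by omega) (by omega))
      (fun n y _ => rfl) (Set.image_id' X) hirr
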